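/- Assume the positive definite time-varying SMRLS gain matrix P(t) ∈ ℝ^{N×N} is differentiable and satisfies, for all t: (i) P(t) is symmetric positive definite with λ_max(P(t)) ≤ p₀ and λ_min(P(t)) ≥ q₀ > 0; (ii) the derivative of its inverse decomposes as d/dt(P_S^{-1}(t)) = Ṗ_{Sζ}^{-1}(t) + Ṗ_{Sζ̄}^{-1}(t), where P_S = S_ζPS_ζᵀ for a fixed orthogonal matrix S_ζ, Ṗ_{Sζ}^{-1} has the block form [[B₁(t), 0],[0, 0]] with B₁(t) = Φ_ζ(t)Φ_ζ(t)ᵀ − Φ_{aζ}(t)Φ_{aζ}(t)ᵀ for regressor vectors Φ_ζ(t), Φ_{aζ}(t) ∈ ℝ^{N_ζ} whose components lie in [0,1], and Ṗ_{Sζ̄}^{-1}(t) is symmetric with λ_max(Ṗ_{Sζ̄}^{-1}(t)) ≤ γ for a constant γ > 0. Let P_ζ(t) = U_ζP_S(t)U_ζᵀ with U_ζ = [I_{N_ζ×N_ζ} 0_{N_ζ×(N−N_ζ)}]. Then there exists a constant σ > 0, namely σ = N + γ(p₀/q₀)², such that Xᵀ(d/dt)(P_ζ^{-1}(t))X ≤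 σ‖X‖² holds for all X ∈ ℝ^{N_ζ} and all t. -/

import Mathlib

open Matrix

section helpers
variable {a b c : ℕ} {t : ℝ}

lemma hd_matrix_mul {A : ℝ → Matrix (Fin a) (Fin b) ℝ} {B : ℝ → Matrix (Fin b) (Fin c) ℝ}
    {A' : Matrix (Fin a) (Fin b) ℝ} {B' : Matrix (Fin b) (Fin c) ℝ}
    (hA : ∀ i j, HasDerivAt (fun s => A s i j) (A' i j) t)
    (hB : ∀ i j, HasDerivAt (fun s => B s i j) (B' i j) t) :
    ∀ i j, HasDerivAt (fun s => (A s * B s) i j) ((A' * B t + A t * B') i j) t := by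
  intro i j
  have h : ∀ s, (A s * B s) i j = ∑ k, A s i k * B s k j := fun s => Matrix.mul_apply
  have h2 : HasDerivAt (fun s => ∑ k, A s i k * B s k j)
      (∑ k, (A' i k * B t k j + A t i k * B' k j)) t :=
    HasDerivAt.fun_sum (fun k _ => ((hA i k).mul (hB k j)))
  simp only [← h] at h2
  convert h2 using 1
  simp [Matrix.add_apply, Matrix.mul_apply, Finset.sum_add_distrib]

lemma diffAt_det {A : ℝ → Matrix (Fin a) (Fin a) ℝ}
    (hA : ∀ i j, DifferentiableAt ℝ (fun s => A s i j) t) :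
    DifferentiableAt ℝ (fun s => (A s).det) t := by
  simp only [Matrix.det_apply']
  apply DifferentiableAt.fun_sum
  intro σ _
  exact DifferentiableAt.const_mul (DifferentiableAt.fun_finsetProd (fun i _ => hA (σ i) i)) _

lemma diffAt_inv_apply {A : ℝ → Matrix (Fin a) (Fin a) ℝ}
    (hA : ∀ i j, DifferentiableAt ℝ (fun s => A s i j) t)
    (hdet : (A t).det ≠ 0) (i j : Fin a) :
    DifferentiableAt ℝ (fun s => (A s)⁻¹ i j) t := by
  have h : ∀ s, (A s)⁻¹ i j = ((A s).det)⁻¹ * (A s).adjugate i j := by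
    intro s
    rw [Matrix.inv_def, Matrix.smul_apply, Ring.inverse_eq_inv', smul_eq_mul]
  simp only [h, Matrix.adjugate_apply]
  apply DifferentiableAt.mul
  · exact (diffAt_det hA).inv hdet
  · apply diffAt_det
    intro k l
    rcases eq_or_ne k j with rfl | hk
    · simp only [Matrix.updateRow_apply, if_pos rfl]
      exact differentiableAt_const _
    · simp only [Matrix.updateRow_apply, if_neg hk]
      exact hA k l

lemma dp_self_nonneg (x : Fin a → ℝ) : 0 ≤ x ⬝ᵥ x :=
  Finset.sum_nonneg fun _ _ => mul_self_nonneg _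

lemma psd_cs {A : Matrix (Fin a) (Fin a) ℝ} (hsym : Aᵀ = A)
    (hpsd : ∀ x : Fin a → ℝ, 0 ≤ x ⬝ᵥ A.mulVec x) (x y : Fin a → ℝ) :
    (x ⬝ᵥ A.mulVec y) ^ 2 ≤ (x ⬝ᵥ A.mulVec x) * (y ⬝ᵥ A.mulVec y) := by
  have hyx : y ⬝ᵥ A.mulVec x = x ⬝ᵥ A.mulVec y := by
    rw [Matrix.dotProduct_mulVec, ← Matrix.mulVec_transpose, hsym, dotProduct_comm]
  have key : ∀ l : ℝ, 0 ≤ (y ⬝ᵥ A.mulVec y) * (l * l) + (2 * (x ⬝ᵥ A.mulVec y)) * l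
      + (x ⬝ᵥ A.mulVec x) := by
    intro l
    have := hpsd (x + l • y)
    simp only [Matrix.mulVec_add, Matrix.mulVec_smul, add_dotProduct,
      dotProduct_add, smul_dotProduct, dotProduct_smul,
      smul_eq_mul] at this
    rw [hyx] at this
    nlinarith [this]
  have := discrim_le_zero key
  rw [discrim] at this
  nlinarith [this]

lemma cs_plain (u v : Fin a → ℝ) : (u ⬝ᵥ v) ^ 2 ≤ (u ⬝ᵥ u) * (v ⬝ᵥ v) := by
  have := psd_cs (A := (1 : Matrix (Fin a) (Fin a) ℝ)) Matrix.transpose_one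
    (fun x => by simpa using dp_self_nonneg x) u v
  simpa using this

lemma qf_conj (M : Matrix (Fin a) (Fin b) ℝ) (A : Matrix (Fin a) (Fin a) ℝ) (x : Fin b → ℝ) :
    x ⬝ᵥ (Mᵀ * A * M).mulVec x = (M.mulVec x) ⬝ᵥ A.mulVec (M.mulVec x) := by
  rw [Matrix.mul_assoc, ← Matrix.mulVec_mulVec, ← Matrix.mulVec_mulVec,
    Matrix.dotProduct_mulVec, Matrix.vecMul_transpose]

lemma quad_vecMulVec (u X : Fin a → ℝ) :
    X ⬝ᵥ (Matrix.vecMulVec u u).mulVec X = (u ⬝ᵥ X) ^ 2 := by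
  simp only [Matrix.mulVec, Matrix.vecMulVec_apply, dotProduct, pow_two,
    Finset.sum_mul_sum, Finset.mul_sum]
  apply Finset.sum_congr rfl; intro i _
  rw [Finset.sum_mul]
  exact Finset.sum_congr rfl fun j _ => by ring

lemma aux1 {p a b : ℝ} (hp : 0 ≤ p) (h0 : 0 < a) (k : a ^ 2 ≤ (p * b) * (p * a)) :
    a ≤ p ^ 2 * b := by nlinarith [k, h0]

lemma aux2 {q a d x : ℝ} (hq : 0 < q) (h0 : 0 < a) (h1 : q * a ≤ d) (h2 : d ^ 2 ≤ a * x) :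
    q ^ 2 * a ≤ x := by
  have hsq : (q * a) ^ 2 ≤ d ^ 2 := pow_le_pow_left₀ (by positivity) h1 2
  nlinarith [hsq, h2, h0]

end helpers

theorem stmt12 (N Nζ : ℕ) (hle : Nζ ≤ N) (p₀ q₀ γ : ℝ)
    (hq₀ : 0 < q₀) (hp₀ : q₀ ≤ p₀) (hγ : 0 < γ)
    (P : ℝ → Matrix (Fin N) (Fin N) ℝ)
    (hPdiff : ∀ t i j, DifferentiableAt ℝ (fun s => P s i j) t)
    (hPpos : ∀ t, (P t).PosDef)
    (hPub : ∀ t, ∀ x : Fin N → ℝ, x ⬝ᵥ (P t).mulVec x ≤ p₀ * (x ⬝ᵥ x))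
    (hPlb : ∀ t, ∀ x : Fin N → ℝ, q₀ * (x ⬝ᵥ x) ≤ x ⬝ᵥ (P t).mulVec x)
    (Sζ : Matrix (Fin N) (Fin N) ℝ) (hSζ : Sζ * Sζᵀ = 1)
    (PS : ℝ → Matrix (Fin N) (Fin N) ℝ) (hPS : ∀ t, PS t = Sζ * P t * Sζᵀ)
    (U : Matrix (Fin Nζ) (Fin N) ℝ)
    (hU : U = Matrix.of fun i j => if j = Fin.castLE hle i then (1 : ℝ) else 0)
    (Φζ Φaζ : ℝ → (Fin Nζ → ℝ))
    (hΦζ : ∀ t i, Φζ t i ∈ Set.Icc (0 : ℝ) 1)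
    (hΦaζ : ∀ t i, Φaζ t i ∈ Set.Icc (0 : ℝ) 1)
    (B₁ : ℝ → Matrix (Fin Nζ) (Fin Nζ) ℝ)
    (hB₁ : ∀ t, B₁ t = Matrix.vecMulVec (Φζ t) (Φζ t) - Matrix.vecMulVec (Φaζ t) (Φaζ t))
    (D : ℝ → Matrix (Fin N) (Fin N) ℝ)
    (hDsym : ∀ t, (D t).IsHermitian)
    (hDub : ∀ t, ∀ x : Fin N → ℝ, x ⬝ᵥ (D t).mulVec x ≤ γ * (x ⬝ᵥ x))
    (hdecomp : ∀ t i j,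
      HasDerivAt (fun s => (PS s)⁻¹ i j) ((Uᵀ * B₁ t * U + D t) i j) t)
    (Pζ : ℝ → Matrix (Fin Nζ) (Fin Nζ) ℝ) (hPζ : ∀ t, Pζ t = U * PS t * Uᵀ) :
    0 < (N : ℝ) + γ * (p₀ / q₀) ^ 2 ∧
    ∀ t, ∀ X : Fin Nζ → ℝ,
      X ⬝ᵥ (Matrix.of fun (i j : Fin Nζ) =>
          deriv (fun s => (Pζ s)⁻¹ i j) t).mulVec X ≤
        ((N : ℝ) + γ * (p₀ / q₀) ^ 2) * (X ⬝ᵥ X) := by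
  have hp₀pos : 0 < p₀ := lt_of_lt_of_le hq₀ hp₀
  have hσpos : 0 < (N : ℝ) + γ * (p₀ / q₀) ^ 2 := by positivity
  refine ⟨hσpos, ?_⟩
  intro t X
  -- U * Uᵀ = 1
  have hUUT : U * Uᵀ = (1 : Matrix (Fin Nζ) (Fin Nζ) ℝ) := by
    subst hU
    ext i j
    simp only [Matrix.mul_apply, Matrix.transpose_apply, Matrix.of_apply, Matrix.one_apply]
    rw [Finset.sum_eq_single (Fin.castLE hle i)]
    · simp [Fin.castLE_inj]
    · intro k _ hk; simp [hk]
    · simp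
  -- symmetry facts
  have hPsymm : ∀ s, (P s)ᵀ = P s := by
    intro s; ext i j
    have := congrFun (congrFun (hPpos s).1 i) j
    simpa [Matrix.conjTranspose_apply] using this
  have hPSsymm : ∀ s, (PS s)ᵀ = PS s := by
    intro s; rw [hPS]
    simp [Matrix.transpose_mul, Matrix.mul_assoc, hPsymm s]
  -- quadratic form bounds for PS
  have hST : ∀ x : Fin N → ℝ, (Sζᵀ.mulVec x) ⬝ᵥ (Sζᵀ.mulVec x) = x ⬝ᵥ x := by
    intro x
    have := qf_conj Sζᵀ (1 : Matrix (Fin N) (Fin N) ℝ) x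
    simpa [Matrix.transpose_transpose, Matrix.mul_one, hSζ] using this.symm
  have hPSform : ∀ s (x : Fin N → ℝ),
      x ⬝ᵥ (PS s).mulVec x = (Sζᵀ.mulVec x) ⬝ᵥ (P s).mulVec (Sζᵀ.mulVec x) := by
    intro s x
    rw [hPS]
    have := qf_conj Sζᵀ (P s) x
    simpa [Matrix.transpose_transpose] using this
  have hPSub : ∀ s (x : Fin N → ℝ), x ⬝ᵥ (PS s).mulVec x ≤ p₀ * (x ⬝ᵥ x) := by
    intro s x; rw [hPSform, ← hST x]; exact hPub s _
  have hPSlb : ∀ s (x : Fin N → ℝ), q₀ * (x ⬝ᵥ x) ≤ x ⬝ᵥ (PS s).mulVec x := by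
    intro s x; rw [hPSform, ← hST x]; exact hPlb s _
  have hPSpsd : ∀ s (x : Fin N → ℝ), 0 ≤ x ⬝ᵥ (PS s).mulVec x := by
    intro s x
    exact le_trans (mul_nonneg hq₀.le (dp_self_nonneg x)) (hPSlb s x)
  -- determinant facts
  have hPSdet : ∀ s, IsUnit (PS s).det := by
    intro s
    refine isUnit_iff_ne_zero.mpr ?_
    rw [hPS, Matrix.det_mul, Matrix.det_mul]
    have h1 : Sζ.det * Sζᵀ.det = 1 := by rw [← Matrix.det_mul, hSζ, Matrix.det_one]
    have h2 : (P s).det ≠ 0 := ne_of_gt (hPpos s).det_pos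
    exact mul_ne_zero (mul_ne_zero (left_ne_zero_of_mul_eq_one h1) h2)
      (right_ne_zero_of_mul_eq_one h1)
  -- Pζ facts
  have hUT : ∀ x : Fin Nζ → ℝ, (Uᵀ.mulVec x) ⬝ᵥ (Uᵀ.mulVec x) = x ⬝ᵥ x := by
    intro x
    have := qf_conj Uᵀ (1 : Matrix (Fin N) (Fin N) ℝ) x
    simpa [Matrix.transpose_transpose, Matrix.mul_one, hUUT] using this.symm
  have hPζform : ∀ s (x : Fin Nζ → ℝ),
      x ⬝ᵥ (Pζ s).mulVec x = (Uᵀ.mulVec x) ⬝ᵥ (PS s).mulVec (Uᵀ.mulVec x) := by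
    intro s x
    rw [hPζ]
    have := qf_conj Uᵀ (PS s) x
    simpa [Matrix.transpose_transpose] using this
  have hPζlb : ∀ s (x : Fin Nζ → ℝ), q₀ * (x ⬝ᵥ x) ≤ x ⬝ᵥ (Pζ s).mulVec x := by
    intro s x; rw [hPζform, ← hUT x]; exact hPSlb s _
  have hPζsymm : ∀ s, (Pζ s)ᵀ = Pζ s := by
    intro s; rw [hPζ]
    simp [Matrix.transpose_mul, Matrix.mul_assoc, hPSsymm s]
  have hPζdet : ∀ s, IsUnit (Pζ s).det := by
    intro s
    rw [← Matrix.isUnit_iff_isUnit_det]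
    rw [← Matrix.mulVec_injective_iff_isUnit]
    intro x y hxy
    have hz : (Pζ s).mulVec (x - y) = 0 := by
      rw [Matrix.mulVec_sub, hxy, sub_self]
    have h0 : (x - y) ⬝ᵥ (Pζ s).mulVec (x - y) = 0 := by rw [hz, dotProduct_zero]
    have h1 := hPζlb s (x - y)
    rw [h0] at h1
    have h2 : (x - y) ⬝ᵥ (x - y) = 0 := by nlinarith [dp_self_nonneg (x - y), h1]
    exact sub_eq_zero.mp (dotProduct_self_eq_zero.mp h2)
  -- derivative of PS
  have hPSdiff : ∀ (i j : Fin N), DifferentiableAt ℝ (fun s => PS s i j) t := by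
    intro i j
    simp only [hPS, Matrix.mul_apply]
    apply DifferentiableAt.fun_sum; intro k _
    apply DifferentiableAt.mul_const
    apply DifferentiableAt.fun_sum; intro l _
    exact (hPdiff t l k).const_mul _
  set S' : Matrix (Fin N) (Fin N) ℝ :=
    Matrix.of (fun i j => deriv (fun s => PS s i j) t) with hS'def
  have hPSder : ∀ i j, HasDerivAt (fun s => PS s i j) (S' i j) t :=
    fun i j => (hPSdiff i j).hasDerivAt
  set K : Matrix (Fin N) (Fin N) ℝ := Uᵀ * B₁ t * U + D t with hKdef
  have hmul1 : ∀ i j, HasDerivAt (fun s => ((PS s)⁻¹ * PS s) i j)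
      ((K * PS t + (PS t)⁻¹ * S') i j) t :=
    hd_matrix_mul (hdecomp t) hPSder
  have heq0 : K * PS t + (PS t)⁻¹ * S' = 0 := by
    ext i j
    have hconst : HasDerivAt (fun s => ((PS s)⁻¹ * PS s) i j) 0 t := by
      have h1 : (fun s => ((PS s)⁻¹ * PS s) i j)
          = fun _ => (1 : Matrix (Fin N) (Fin N) ℝ) i j := by
        funext s; rw [Matrix.nonsing_inv_mul _ (hPSdet s)]
      rw [h1]; exact hasDerivAt_const _ _
    have := (hmul1 i j).unique hconst
    simpa using this
  have hS'eq : S' = -(PS t * K * PS t) := by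
    have h2 : PS t * (K * PS t + (PS t)⁻¹ * S') = 0 := by rw [heq0, Matrix.mul_zero]
    rw [Matrix.mul_add, ← Matrix.mul_assoc (PS t) (PS t)⁻¹ S',
      Matrix.mul_nonsing_inv _ (hPSdet t), Matrix.one_mul] at h2
    have h3 := eq_neg_of_add_eq_zero_right h2
    rw [h3, ← Matrix.mul_assoc]
  -- derivative of Pζ
  set Z : Matrix (Fin Nζ) (Fin Nζ) ℝ := U * S' * Uᵀ with hZdef
  have hPζder : ∀ i j, HasDerivAt (fun s => Pζ s i j) (Z i j) t := by
    have hUc : ∀ (i : Fin Nζ) (j : Fin N),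
        HasDerivAt (fun _ : ℝ => U i j) ((0 : Matrix (Fin Nζ) (Fin N) ℝ) i j) t := by
      intro i j; simpa using hasDerivAt_const t (U i j)
    have hUc' : ∀ (i : Fin N) (j : Fin Nζ),
        HasDerivAt (fun _ : ℝ => Uᵀ i j) ((0 : Matrix (Fin N) (Fin Nζ) ℝ) i j) t := by
      intro i j; simpa using hasDerivAt_const t (Uᵀ i j)
    have h1 := hd_matrix_mul (A := fun _ => U) (B := PS) hUc hPSder
    have h2 := hd_matrix_mul (A := fun s => U * PS s) (B := fun _ => Uᵀ) h1 hUc'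
    intro i j
    have h3 := h2 i j
    simp only [Matrix.zero_mul, Matrix.mul_zero, zero_add, add_zero] at h3
    have h4 : (fun s => (U * PS s * Uᵀ) i j) = fun s => Pζ s i j := by
      funext s; rw [hPζ]
    rw [h4] at h3
    exact h3
  -- derivative of Pζ⁻¹
  have hPζdiff : ∀ (i j : Fin Nζ), DifferentiableAt ℝ (fun s => (Pζ s)⁻¹ i j) t :=
    diffAt_inv_apply (fun i j => (hPζder i j).differentiableAt) (hPζdet t).ne_zero
  set E : Matrix (Fin Nζ) (Fin Nζ) ℝ :=
    Matrix.of (fun i j => deriv (fun s => (Pζ s)⁻¹ i j) t) with hEdef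
  have hEder : ∀ i j, HasDerivAt (fun s => (Pζ s)⁻¹ i j) (E i j) t :=
    fun i j => (hPζdiff i j).hasDerivAt
  have hmul2 : ∀ i j, HasDerivAt (fun s => ((Pζ s)⁻¹ * Pζ s) i j)
      ((E * Pζ t + (Pζ t)⁻¹ * Z) i j) t :=
    hd_matrix_mul hEder hPζder
  have heq02 : E * Pζ t + (Pζ t)⁻¹ * Z = 0 := by
    ext i j
    have hconst : HasDerivAt (fun s => ((Pζ s)⁻¹ * Pζ s) i j) 0 t := by
      have h1 : (fun s => ((Pζ s)⁻¹ * Pζ s) i j)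
          = fun _ => (1 : Matrix (Fin Nζ) (Fin Nζ) ℝ) i j := by
        funext s; rw [Matrix.nonsing_inv_mul _ (hPζdet s)]
      rw [h1]; exact hasDerivAt_const _ _
    have := (hmul2 i j).unique hconst
    simpa using this
  set Q : Matrix (Fin Nζ) (Fin Nζ) ℝ := (Pζ t)⁻¹ with hQdef
  have hQP : Q * Pζ t = 1 := Matrix.nonsing_inv_mul _ (hPζdet t)
  have hPQ : Pζ t * Q = 1 := Matrix.mul_nonsing_inv _ (hPζdet t)
  have hE : E = -(Q * Z * Q) := by
    have h2 : (E * Pζ t + Q * Z) * Q = 0 := by rw [heq02, Matrix.zero_mul]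
    rw [Matrix.add_mul, Matrix.mul_assoc E (Pζ t) Q, hPQ, Matrix.mul_one] at h2
    have h3 := eq_neg_of_add_eq_zero_left h2
    rw [h3, Matrix.mul_assoc]
  -- the key formula
  have hEformula : E = B₁ t + (Q * U * PS t) * D t * (PS t * Uᵀ * Q) := by
    rw [hE, hZdef, hS'eq, hKdef]
    have expand : Q * (U * -(PS t * (Uᵀ * B₁ t * U + D t) * PS t) * Uᵀ) * Q
        = -(Q * ((U * PS t * Uᵀ) * B₁ t * (U * PS t * Uᵀ)) * Q)
          - (Q * U * PS t) * D t * (PS t * Uᵀ * Q) := by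
      simp only [Matrix.mul_add, Matrix.add_mul, Matrix.mul_neg, Matrix.neg_mul,
        Matrix.mul_assoc, sub_eq_add_neg]
      abel
    rw [expand, neg_sub, sub_neg_eq_add, ← hPζ t]
    have hQBQ : Q * (Pζ t * B₁ t * Pζ t) * Q = B₁ t := by
      rw [show Q * (Pζ t * B₁ t * Pζ t) * Q = Q * Pζ t * B₁ t * (Pζ t * Q) by
        simp only [Matrix.mul_assoc], hQP, hPQ, Matrix.one_mul, Matrix.mul_one]
    rw [hQBQ, add_comm]
  -- quadratic form estimates
  rw [hEformula, Matrix.add_mulVec, dotProduct_add]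
  have hQsym : Qᵀ = Q := by
    rw [hQdef, Matrix.transpose_nonsing_inv, hPζsymm t]
  have hMT : (PS t * Uᵀ * Q)ᵀ = Q * U * PS t := by
    rw [Matrix.transpose_mul, Matrix.transpose_mul, Matrix.transpose_transpose, hQsym,
      hPSsymm t, Matrix.mul_assoc]
  have hterm2 : X ⬝ᵥ ((Q * U * PS t) * D t * (PS t * Uᵀ * Q)).mulVec X
      = ((PS t * Uᵀ * Q).mulVec X) ⬝ᵥ (D t).mulVec ((PS t * Uᵀ * Q).mulVec X) := by
    rw [← hMT]; exact qf_conj _ _ _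
  rw [hterm2]
  set y : Fin N → ℝ := (PS t * Uᵀ * Q).mulVec X with hy
  set v : Fin Nζ → ℝ := Q.mulVec X with hv
  have hyw : y = (PS t).mulVec (Uᵀ.mulVec v) := by
    rw [hy, hv, ← Matrix.mulVec_mulVec, ← Matrix.mulVec_mulVec]
  set w : Fin N → ℝ := Uᵀ.mulVec v with hw
  have hww : w ⬝ᵥ w = v ⬝ᵥ v := hUT v
  have hPv : (Pζ t).mulVec v = X := by
    rw [hv, Matrix.mulVec_mulVec, hPQ, Matrix.one_mulVec]
  have hvb : q₀ ^ 2 * (v ⬝ᵥ v) ≤ X ⬝ᵥ X := by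
    have h1 : q₀ * (v ⬝ᵥ v) ≤ v ⬝ᵥ X := by
      have := hPζlb t v; rwa [hPv] at this
    have h2 := cs_plain v X
    rcases eq_or_lt_of_le (dp_self_nonneg v) with h0 | h0
    · rw [← h0, mul_zero]; exact dp_self_nonneg X
    · exact aux2 hq₀ h0 h1 h2
  have hyb : y ⬝ᵥ y ≤ p₀ ^ 2 * (w ⬝ᵥ w) := by
    have hcs := psd_cs (hPSsymm t) (hPSpsd t) w y
    have hyy : w ⬝ᵥ (PS t).mulVec y = y ⬝ᵥ y := by
      rw [Matrix.dotProduct_mulVec, ← Matrix.mulVec_transpose, hPSsymm t, ← hyw]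
    rw [hyy] at hcs
    have hw1 : w ⬝ᵥ (PS t).mulVec w ≤ p₀ * (w ⬝ᵥ w) := hPSub t w
    have hy1 : y ⬝ᵥ (PS t).mulVec y ≤ p₀ * (y ⬝ᵥ y) := hPSub t y
    rcases eq_or_lt_of_le (dp_self_nonneg y) with h0 | h0
    · rw [← h0]; exact mul_nonneg (by positivity) (dp_self_nonneg w)
    · have k1 : (y ⬝ᵥ y) ^ 2 ≤ (p₀ * (w ⬝ᵥ w)) * (p₀ * (y ⬝ᵥ y)) :=
        le_trans hcs (mul_le_mul hw1 hy1 (hPSpsd t y)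
          (mul_nonneg hp₀pos.le (dp_self_nonneg w)))
      exact aux1 hp₀pos.le h0 k1
  have hB1b : X ⬝ᵥ (B₁ t).mulVec X ≤ (N : ℝ) * (X ⬝ᵥ X) := by
    rw [hB₁ t, Matrix.sub_mulVec, dotProduct_sub, quad_vecMulVec, quad_vecMulVec]
    have h1 := cs_plain (Φζ t) X
    have h2 : Φζ t ⬝ᵥ Φζ t ≤ (Nζ : ℝ) := by
      have hb : ∀ i, Φζ t i * Φζ t i ≤ 1 := fun i => by
        nlinarith [(hΦζ t i).1, (hΦζ t i).2]
      calc Φζ t ⬝ᵥ Φζ t ≤ ∑ _i : Fin Nζ, (1 : ℝ) :=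
            Finset.sum_le_sum (fun i _ => hb i)
        _ = (Nζ : ℝ) := by simp
    have h3 : (Nζ : ℝ) ≤ (N : ℝ) := Nat.cast_le.mpr hle
    have m1 : (Φζ t ⬝ᵥ Φζ t) * (X ⬝ᵥ X) ≤ (Nζ : ℝ) * (X ⬝ᵥ X) :=
      mul_le_mul_of_nonneg_right h2 (dp_self_nonneg X)
    have m2 : (Nζ : ℝ) * (X ⬝ᵥ X) ≤ (N : ℝ) * (X ⬝ᵥ X) :=
      mul_le_mul_of_nonneg_right h3 (dp_self_nonneg X)
    linarith [h1, m1, m2, sq_nonneg (Φaζ t ⬝ᵥ X)]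
  have hDb : y ⬝ᵥ (D t).mulVec y ≤ γ * (p₀ / q₀) ^ 2 * (X ⬝ᵥ X) := by
    have h1 := hDub t y
    have hq2 : (0 : ℝ) < q₀ ^ 2 := by positivity
    rw [div_pow, show γ * (p₀ ^ 2 / q₀ ^ 2) * (X ⬝ᵥ X)
      = (γ * (p₀ ^ 2 * (X ⬝ᵥ X))) / q₀ ^ 2 by ring, le_div_iff₀ hq2]
    have hyb' : y ⬝ᵥ y ≤ p₀ ^ 2 * (v ⬝ᵥ v) := by rw [← hww]; exact hyb
    have s1 : y ⬝ᵥ (D t).mulVec y * q₀ ^ 2 ≤ γ * (y ⬝ᵥ y) * q₀ ^ 2 :=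
      mul_le_mul_of_nonneg_right h1 hq2.le
    have s2 := mul_le_mul_of_nonneg_left hyb' (mul_nonneg hγ.le hq2.le)
    have s4 := mul_le_mul_of_nonneg_left hvb (by positivity : (0:ℝ) ≤ γ * p₀ ^ 2)
    linarith [s1, s2, s4]
  rw [add_mul]
  exact add_le_add hB1b hDb
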